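/- Let m, d be positive natural numbers, let F : ℝ^m → Matrix (Fin m) (Fin d) ℝ be any function, n⁺ ∈ ℝ^d with n⁻ = −n⁺, u⁺, u⁻ ∈ ℝ^m, let θ be an invertible m×m real matrix, and let s⁺, s⁻ be real numbers with s⁺ + s⁻ ≠ 0. If τ⁺ = s⁺·θ and τ⁻ = s⁻·θ, then the unique solution of (τ⁺ + τ⁻)·û = τ⁺·u⁺ + τ⁻·u⁻ is the weighted average û = (s⁺·u⁺ + s⁻·u⁻)/(s⁺ + s⁻), and the corresponding HDG numerical flux seen from each side satisfies F(û)·n^± + τ^±·(u^± − û) = F(û)·n^± + (s⁺·s⁻/(s⁺ + s⁻))·θ·(u^± − u^∓). -/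

import Mathlib

/-- Discontinuous stabilisation across the interface (`τ^± = s^± θ`):
the hybrid variable is the weighted average of the two states and the HDG
numerical flux reduces to the HLL-type form. -/
theorem hdg_discontinuous_stabilisation
    (m d : ℕ) (hm : 0 < m) (hd : 0 < d)
    (F : (Fin m → ℝ) → Matrix (Fin m) (Fin d) ℝ)
    (nplus nminus : Fin d → ℝ) (hn : nminus = -nplus)
    (uplus uminus : Fin m → ℝ)
    (θ : Matrix (Fin m) (Fin m) ℝ) (hθ : IsUnit θ)
    (splus sminus : ℝ) (hs : splus + sminus ≠ 0)
    (τplus τminus : Matrix (Fin m) (Fin m) ℝ)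
    (hp : τplus = splus • θ) (hmn : τminus = sminus • θ) :
    (∀ uhat : Fin m → ℝ,
      (τplus + τminus).mulVec uhat = τplus.mulVec uplus + τminus.mulVec uminus ↔
        uhat = (splus + sminus)⁻¹ • (splus • uplus + sminus • uminus)) ∧
    (∀ uhat : Fin m → ℝ,
      uhat = (splus + sminus)⁻¹ • (splus • uplus + sminus • uminus) →
      ((F uhat).mulVec nplus + τplus.mulVec (uplus - uhat) =
        (F uhat).mulVec nplus +
          (splus * sminus / (splus + sminus)) • θ.mulVec (uplus - uminus)) ∧
      ((F uhat).mulVec nminus + τminus.mulVec (uminus - uhat) =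
        (F uhat).mulVec nminus +
          (splus * sminus / (splus + sminus)) • θ.mulVec (uminus - uplus))) := by
  subst hp hmn hn
  have hdet : IsUnit θ.det := (Matrix.isUnit_iff_isUnit_det θ).mp hθ
  have hinj : Function.Injective θ.mulVec := by
    intro x y hxy
    have := congrArg (θ⁻¹.mulVec) hxy
    simpa [Matrix.mulVec_mulVec, Matrix.nonsing_inv_mul θ hdet] using this
  constructor
  · intro uhat
    have key : ((splus • θ + sminus • θ)).mulVec uhat
        = θ.mulVec ((splus + sminus) • uhat) := by
      simp [Matrix.add_mulVec, Matrix.smul_mulVec, add_smul,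
        Matrix.mulVec_add, Matrix.mulVec_smul]
    have key2 : (splus • θ).mulVec uplus + (sminus • θ).mulVec uminus
        = θ.mulVec (splus • uplus + sminus • uminus) := by
      simp [Matrix.smul_mulVec, Matrix.mulVec_smul, Matrix.mulVec_add]
    rw [key, key2]
    constructor
    · intro h
      have h2 := hinj h
      have := congrArg (fun v => (splus + sminus)⁻¹ • v) h2
      simpa [smul_smul, inv_mul_cancel₀ hs] using this
    · intro h
      subst h
      congr 1
      rw [smul_smul, mul_inv_cancel₀ hs, one_smul]
  · intro uhat h
    subst h
    have hup : uplus - (splus + sminus)⁻¹ • (splus • uplus + sminus • uminus)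
        = (sminus / (splus + sminus)) • (uplus - uminus) := by
      funext i
      simp only [Pi.sub_apply, Pi.smul_apply, Pi.add_apply, smul_eq_mul]
      field_simp
      ring
    have hum : uminus - (splus + sminus)⁻¹ • (splus • uplus + sminus • uminus)
        = (splus / (splus + sminus)) • (uminus - uplus) := by
      funext i
      simp only [Pi.sub_apply, Pi.smul_apply, Pi.add_apply, smul_eq_mul]
      field_simp
      ring
    constructor
    · congr 1
      rw [hup, Matrix.smul_mulVec, Matrix.mulVec_smul, smul_smul]
      congr 1
      field_simp
    · congr 1
      rw [hum, Matrix.smul_mulVec, Matrix.mulVec_smul, smul_smul]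
      congr 1
      field_simp
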